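/- Let R be a local commutative ring with residue field of characteristic ≠ 2, I ⊊ R a proper ideal, n ≥ 2. Let Cₙ(R) = {x ∈ Rⁿ : (x) = R and xᵀSx = 0} for the split form S. Then the reduction map ρ_I : Rⁿ → (R/I)ⁿ maps Cₙ(R) onto Cₙ(R/I), and |Cₙ(R)| = |Cₙ(R/I)| · |I|^{n−1} whenever these sets are finite. -/
import Mathlib


open Matrix

/-- The split symmetric form. -/
def splitForm (R : Type*) [CommRing R] (n : ℕ) : Matrix (Fin n) (Fin n) R :=
  Matrix.of fun i j =>
    if ((i : ℕ) < n / 2 ∧ (j : ℕ) = i + n / 2) ∨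
       ((j : ℕ) < n / 2 ∧ (i : ℕ) = j + n / 2) ∨
       ((i : ℕ) = j ∧ (i : ℕ) = 2 * (n / 2)) then 1 else 0

/-- The set `Cₙ(R)` of unimodular isotropic vectors. -/
def unimodIsotropic (R : Type*) [CommRing R] (n : ℕ) : Set (Fin n → R) :=
  {x | Ideal.span (Set.range x) = ⊤ ∧ x ⬝ᵥ (splitForm R n *ᵥ x) = 0}


namespace UIaux

def sg (n : ℕ) (i : Fin n) : Fin n :=
  if h : (i : ℕ) < n / 2 then ⟨i + n / 2, by omega⟩
  else if h2 : (i : ℕ) < 2 * (n / 2) then ⟨i - n / 2, by have := i.isLt; omega⟩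
  else i

lemma sg_val (n : ℕ) (i : Fin n) :
    ((sg n i : Fin n) : ℕ) =
      if (i : ℕ) < n / 2 then i + n / 2 else if (i : ℕ) < 2 * (n / 2) then i - n / 2 else i := by
  unfold sg; split_ifs <;> rfl

lemma sg_invol (n : ℕ) (i : Fin n) : sg n (sg n i) = i := by
  have h1 := sg_val n i
  have h2 := sg_val n (sg n i)
  have := i.isLt
  apply Fin.ext
  split_ifs at h1 h2 <;> omega

lemma sg_ne (n : ℕ) (i : Fin n) (h : (i : ℕ) < 2 * (n / 2)) : sg n i ≠ i := by
  have h1 := sg_val n i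
  intro he
  rw [he] at h1
  split_ifs at h1 <;> omega

lemma sg_eq_self (n : ℕ) (i : Fin n) (h : ¬ (i : ℕ) < 2 * (n / 2)) : sg n i = i := by
  unfold sg
  have : ¬ (i:ℕ) < n / 2 := by omega
  simp [this, h]

variable {R : Type*} [CommRing R] {n : ℕ}

lemma splitForm_eq (i j : Fin n) : splitForm R n i j = if j = sg n i then 1 else 0 := by
  have hv := sg_val n i
  have hi := i.isLt
  have hj := j.isLt
  unfold splitForm
  rw [Matrix.of_apply]
  have hiff : (j = sg n i) ↔ ((j : ℕ) = ((sg n i : Fin n) : ℕ)) := ⟨fun h => by rw [h], fun h => Fin.ext h⟩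
  have hcond : (((i : ℕ) < n / 2 ∧ (j : ℕ) = i + n / 2) ∨
       ((j : ℕ) < n / 2 ∧ (i : ℕ) = j + n / 2) ∨
       ((i : ℕ) = j ∧ (i : ℕ) = 2 * (n / 2))) ↔ (j = sg n i) := by
    rw [hiff]; split_ifs at hv <;> omega
  exact if_congr hcond rfl rfl

lemma mulVec_sg (x : Fin n → R) (i : Fin n) : (splitForm R n *ᵥ x) i = x (sg n i) := by
  unfold Matrix.mulVec dotProduct
  have : ∀ j, splitForm R n i j * x j = if j = sg n i then x j else 0 := by
    intro j; rw [splitForm_eq]; split_ifs <;> simp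
  rw [Finset.sum_congr rfl fun j _ => this j]
  simp

def qf (x : Fin n → R) : R := ∑ i, x i * x (sg n i)

lemma dot_eq_qf (x : Fin n → R) : x ⬝ᵥ (splitForm R n *ᵥ x) = qf x := by
  unfold dotProduct qf
  exact Finset.sum_congr rfl fun i _ => by rw [mulVec_sg]

lemma mem_iff (x : Fin n → R) :
    x ∈ unimodIsotropic R n ↔ Ideal.span (Set.range x) = ⊤ ∧ qf x = 0 := by
  rw [unimodIsotropic, Set.mem_setOf_eq, dot_eq_qf]

lemma qf_map {S : Type*} [CommRing S] (f : R →+* S) (x : Fin n → R) :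
    qf (⇑f ∘ x) = f (qf x) := by
  unfold qf
  rw [map_sum]
  exact Finset.sum_congr rfl fun i _ => by simp

end UIaux

namespace UIaux

variable {R : Type*} [CommRing R] {n : ℕ}

def rest (x : Fin n → R) (j i₀ : Fin n) : R :=
  ∑ i ∈ (Finset.univ.erase j).erase i₀, x i * x (sg n i)

lemma qf_split (x : Fin n → R) {j i₀ : Fin n} (hj : sg n j = i₀) (hne : j ≠ i₀) :
    qf x = 2 * (x i₀ * x j) + rest x j i₀ := by
  have hi : sg n i₀ = j := by rw [← hj, sg_invol]
  have h1 : i₀ ∈ Finset.univ.erase j := Finset.mem_erase.mpr ⟨Ne.symm hne, Finset.mem_univ _⟩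
  have e1 : qf x = x j * x (sg n j) + ∑ i ∈ Finset.univ.erase j, x i * x (sg n i) :=
    (Finset.add_sum_erase _ _ (Finset.mem_univ j)).symm
  have e2 : ∑ i ∈ Finset.univ.erase j, x i * x (sg n i)
      = x i₀ * x (sg n i₀) + rest x j i₀ := (Finset.add_sum_erase _ _ h1).symm
  rw [e1, e2, hj, hi]; ring

lemma rest_update (x : Fin n → R) {j i₀ : Fin n} (hj : sg n j = i₀) (v : R) :
    rest (Function.update x j v) j i₀ = rest x j i₀ := by
  unfold rest
  refine Finset.sum_congr rfl fun i hi => ?_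
  obtain ⟨hi0, hij, -⟩ : i ≠ i₀ ∧ i ≠ j ∧ True := by
    simp [Finset.mem_erase] at hi; exact ⟨hi.1, hi.2, trivial⟩
  have hsg : sg n i ≠ j := fun h => hi0 (by rw [← hj, ← h, sg_invol])
  rw [Function.update_of_ne hij, Function.update_of_ne hsg]

noncomputable def solveV (x : Fin n → R) (j i₀ : Fin n) : R :=
  -(Ring.inverse (2 * x i₀) * rest x j i₀)

lemma qf_update_solve (x : Fin n → R) {j i₀ : Fin n} (hj : sg n j = i₀) (hne : j ≠ i₀)
    (hu : IsUnit (2 * x i₀)) :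
    qf (Function.update x j (solveV x j i₀)) = 0 := by
  have h1 : (2 * x i₀) * Ring.inverse (2 * x i₀) = 1 := Ring.mul_inverse_cancel _ hu
  rw [qf_split (Function.update x j (solveV x j i₀)) hj hne, rest_update x hj,
    Function.update_self, Function.update_of_ne (Ne.symm hne)]
  unfold solveV
  linear_combination (-(rest x j i₀)) * h1

lemma qf_update_eq (x : Fin n → R) {j i₀ : Fin n} (hj : sg n j = i₀) (hne : j ≠ i₀) (w : R) :
    qf (Function.update x j w) = 2 * (x i₀ * w) + rest x j i₀ := by
  rw [qf_split (Function.update x j w) hj hne, rest_update x hj,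
    Function.update_self, Function.update_of_ne (Ne.symm hne)]

lemma qf_update_unique (x : Fin n → R) {j i₀ : Fin n} (hj : sg n j = i₀) (hne : j ≠ i₀)
    (hu : IsUnit (2 * x i₀)) (w : R) (hw : qf (Function.update x j w) = 0) :
    w = solveV x j i₀ := by
  have h2 := qf_update_solve x hj hne hu
  rw [qf_update_eq x hj hne] at hw h2
  have : (2 * x i₀) * w = (2 * x i₀) * solveV x j i₀ := by linear_combination hw - h2
  exact hu.mul_left_cancel this

lemma solve_key (x : Fin n → R) {j i₀ : Fin n} (hj : sg n j = i₀) (hne : j ≠ i₀)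
    (hu : IsUnit (2 * x i₀)) :
    (2 * x i₀) * (x j - solveV x j i₀) = qf x := by
  have h2 := qf_update_solve x hj hne hu
  rw [qf_update_eq x hj hne] at h2
  rw [qf_split x hj hne]
  linear_combination -h2

lemma solve_sub_mem {I : Ideal R} (x : Fin n → R) {j i₀ : Fin n} (hj : sg n j = i₀)
    (hne : j ≠ i₀) (hu : IsUnit (2 * x i₀)) (hq : qf x ∈ I) :
    x j - solveV x j i₀ ∈ I := by
  have h := solve_key x hj hne hu
  have : x j - solveV x j i₀ = Ring.inverse (2 * x i₀) * qf x := by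
    rw [← h, ← mul_assoc, Ring.inverse_mul_cancel _ hu, one_mul]
  rw [this]
  exact Ideal.mul_mem_left _ _ hq

end UIaux

namespace UIaux

variable {R : Type*} [CommRing R] [IsLocalRing R] {n : ℕ}

lemma two_isUnit (hchar : ringChar (IsLocalRing.ResidueField R) ≠ 2) : IsUnit (2 : R) := by
  rw [← IsLocalRing.notMem_maximalIdeal (R := R)]
  intro hmem
  have h2 : ((2 : ℕ) : IsLocalRing.ResidueField R) = 0 := by
    rw [← map_natCast (IsLocalRing.residue R) 2, IsLocalRing.residue_eq_zero_iff]
    exact_mod_cast hmem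
  have hdvd : ringChar (IsLocalRing.ResidueField R) ∣ 2 := (ringChar.spec _ 2).mp h2
  rcases (Nat.dvd_prime Nat.prime_two).mp hdvd with h1 | h1
  · have h0 : ((1 : ℕ) : IsLocalRing.ResidueField R) = 0 := (ringChar.spec _ 1).mpr (by rw [h1])
    simp at h0
  · exact hchar h1

lemma unit_add_mem {a b : R} (ha : IsUnit a) (hb : b ∈ IsLocalRing.maximalIdeal R) :
    IsUnit (a + b) := by
  by_contra h
  have : a + b ∈ IsLocalRing.maximalIdeal R := by
    rwa [← IsLocalRing.notMem_maximalIdeal, not_not] at h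
  have : a ∈ IsLocalRing.maximalIdeal R := by
    have := Submodule.sub_mem _ this hb
    simpa using this
  exact (IsLocalRing.notMem_maximalIdeal.mpr ha) this

omit [IsLocalRing R] in
lemma span_of_unit {x : Fin n → R} {i : Fin n} (hu : IsUnit (x i)) :
    Ideal.span (Set.range x) = ⊤ :=
  Ideal.eq_top_of_isUnit_mem _ (Ideal.subset_span (Set.mem_range_self i)) hu

lemma exists_unit_of_span {x : Fin n → R} (hx : Ideal.span (Set.range x) = ⊤) :
    ∃ i, IsUnit (x i) := by
  by_contra h
  push_neg at h
  have hsub : Set.range x ⊆ (IsLocalRing.maximalIdeal R : Set R) := by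
    rintro - ⟨i, rfl⟩
    rw [SetLike.mem_coe, IsLocalRing.mem_maximalIdeal]
    exact h i
  have := Ideal.span_le.mpr hsub
  rw [hx] at this
  exact (IsLocalRing.maximalIdeal.isMaximal R).ne_top (top_le_iff.mp this)

lemma exists_unit_lt {x : Fin n → R}
    (hx : Ideal.span (Set.range x) = ⊤) (hq : qf x ∈ IsLocalRing.maximalIdeal R) :
    ∃ i : Fin n, (i : ℕ) < 2 * (n / 2) ∧ IsUnit (x i) := by
  by_contra h
  push_neg at h
  -- all coordinates with index < 2*(n/2) are in the maximal ideal
  have hmem : ∀ i : Fin n, (i : ℕ) < 2 * (n / 2) → x i ∈ IsLocalRing.maximalIdeal R := by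
    intro i hi
    rw [IsLocalRing.mem_maximalIdeal]
    exact h i hi
  have hall : ∀ i : Fin n, x i ∈ IsLocalRing.maximalIdeal R := by
    intro i
    by_cases hi : (i : ℕ) < 2 * (n / 2)
    · exact hmem i hi
    · -- i is the odd tail index; use primality of the maximal ideal on x i * x i
      have hsg : sg n i = i := sg_eq_self n i hi
      have e1 : qf x = x i * x (sg n i) + ∑ k ∈ Finset.univ.erase i, x k * x (sg n k) :=
        (Finset.add_sum_erase _ _ (Finset.mem_univ i)).symm
      have hsum : ∑ k ∈ Finset.univ.erase i, x k * x (sg n k) ∈ IsLocalRing.maximalIdeal R := by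
        refine Ideal.sum_mem _ fun k hk => ?_
        have hk' : k ≠ i := (Finset.mem_erase.mp hk).1
        have hklt : (k : ℕ) < 2 * (n / 2) := by
          have := k.isLt
          have := i.isLt
          have : (k : ℕ) ≠ (i : ℕ) := fun hc => hk' (Fin.ext hc)
          omega
        exact Ideal.mul_mem_right _ _ (hmem k hklt)
      have hsq : x i * x i ∈ IsLocalRing.maximalIdeal R := by
        have : x i * x (sg n i) = qf x - ∑ k ∈ Finset.univ.erase i, x k * x (sg n k) := by
          rw [e1]; ring
        rw [hsg] at this
        rw [this]
        exact Submodule.sub_mem _ hq hsum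
      exact ((IsLocalRing.maximalIdeal.isMaximal R).isPrime.mem_or_mem hsq).elim id id
  obtain ⟨i, hu⟩ := exists_unit_of_span hx
  exact (IsLocalRing.notMem_maximalIdeal.mpr hu) (hall i)

end UIaux

namespace UIaux

variable {R : Type*} [CommRing R] [IsLocalRing R] {n : ℕ} {I : Ideal R}

omit [IsLocalRing R] in
lemma mem_image_of_mem {x : Fin n → R} (hx : x ∈ unimodIsotropic R n) :
    ⇑(Ideal.Quotient.mk I) ∘ x ∈ unimodIsotropic (R ⧸ I) n := by
  rw [mem_iff] at hx ⊢
  constructor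
  · rw [Set.range_comp, ← Ideal.map_span (Ideal.Quotient.mk I), hx.1]
    exact Ideal.map_top _
  · rw [qf_map, hx.2, map_zero]

lemma span_lift (hI : I ≠ ⊤) {x : Fin n → R}
    (h : Ideal.span (Set.range (⇑(Ideal.Quotient.mk I) ∘ x)) = ⊤) :
    Ideal.span (Set.range x) = ⊤ := by
  by_contra hne
  have hle : Ideal.span (Set.range x) ≤ IsLocalRing.maximalIdeal R :=
    IsLocalRing.le_maximalIdeal hne
  have hmap : Ideal.map (Ideal.Quotient.mk I) (IsLocalRing.maximalIdeal R) = ⊤ := by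
    have he : Ideal.span (Set.range (⇑(Ideal.Quotient.mk I) ∘ x))
        = Ideal.map (Ideal.Quotient.mk I) (Ideal.span (Set.range x)) := by
      rw [Ideal.map_span, Set.range_comp]
    rw [eq_top_iff, ← h, he]
    exact Ideal.map_mono hle
  have hcomap := Ideal.comap_map_of_surjective (Ideal.Quotient.mk I) Ideal.Quotient.mk_surjective
      (IsLocalRing.maximalIdeal R)
  rw [hmap, Ideal.comap_top, ← RingHom.ker_eq_comap_bot, Ideal.mk_ker] at hcomap
  have : IsLocalRing.maximalIdeal R = ⊤ := by
    have := sup_eq_left.mpr (IsLocalRing.le_maximalIdeal hI)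
    rw [← this, ← hcomap]
  exact (IsLocalRing.maximalIdeal.isMaximal R).ne_top this

lemma exists_lift (hchar : ringChar (IsLocalRing.ResidueField R) ≠ 2) (hI : I ≠ ⊤)
    {y : Fin n → R ⧸ I} (hy : y ∈ unimodIsotropic (R ⧸ I) n) :
    ∃ x ∈ unimodIsotropic R n, ⇑(Ideal.Quotient.mk I) ∘ x = y := by
  rw [mem_iff] at hy
  obtain ⟨x', hx'⟩ : ∃ x' : Fin n → R, ⇑(Ideal.Quotient.mk I) ∘ x' = y := by
    choose x' hx' using fun i => Ideal.Quotient.mk_surjective (y i)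
    exact ⟨x', funext hx'⟩
  have hsp : Ideal.span (Set.range x') = ⊤ := span_lift hI (by rw [hx']; exact hy.1)
  have hqI : qf x' ∈ I := by
    rw [← Ideal.Quotient.eq_zero_iff_mem, ← qf_map, hx', hy.2]
  have hqm : qf x' ∈ IsLocalRing.maximalIdeal R := IsLocalRing.le_maximalIdeal hI hqI
  obtain ⟨i₀, hlt, hu⟩ := exists_unit_lt hsp hqm
  set j := sg n i₀ with hjdef
  have hj : sg n j = i₀ := sg_invol n i₀
  have hne : j ≠ i₀ := sg_ne n i₀ hlt
  have hu2 : IsUnit (2 * x' i₀) := (two_isUnit hchar).mul hu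
  refine ⟨Function.update x' j (solveV x' j i₀), ?_, ?_⟩
  · rw [mem_iff]
    refine ⟨span_of_unit (i := i₀) ?_, qf_update_solve x' hj hne hu2⟩
    rwa [Function.update_of_ne (Ne.symm hne)]
  · rw [← hx']
    funext i
    by_cases hij : i = j
    · subst hij
      simp only [Function.comp_apply, Function.update_self]
      rw [Ideal.Quotient.mk_eq_mk_iff_sub_mem]
      simpa [neg_sub] using Submodule.neg_mem _ (solve_sub_mem x' hj hne hu2 hqI)
    · simp only [Function.comp_apply, Function.update_of_ne hij]

end UIaux

namespace UIaux

variable {R : Type*} [CommRing R] [IsLocalRing R] {n : ℕ} {I : Ideal R}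

lemma fiber_equiv (hchar : ringChar (IsLocalRing.ResidueField R) ≠ 2) (hI : I ≠ ⊤)
    {x₀ : Fin n → R} (hx₀ : x₀ ∈ unimodIsotropic R n) :
    ∃ j : Fin n, Nonempty
      ({x : Fin n → R // x ∈ unimodIsotropic R n ∧
          ⇑(Ideal.Quotient.mk I) ∘ x = ⇑(Ideal.Quotient.mk I) ∘ x₀} ≃
        ({i : Fin n // i ≠ j} → I)) := by
  have hIm : I ≤ IsLocalRing.maximalIdeal R := IsLocalRing.le_maximalIdeal hI
  rw [mem_iff] at hx₀
  obtain ⟨hsp, hq0⟩ := hx₀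
  obtain ⟨i₀, hlt, hu⟩ := exists_unit_lt hsp (hq0 ▸ Submodule.zero_mem _)
  set j := sg n i₀ with hjdef
  have hj : sg n j = i₀ := sg_invol n i₀
  have hne : j ≠ i₀ := sg_ne n i₀ hlt
  refine ⟨j, ⟨?_⟩⟩
  -- auxiliary construction
  set x₁ : ({i : Fin n // i ≠ j} → I) → (Fin n → R) :=
    fun δ i => x₀ i + if h : i = j then 0 else (δ ⟨i, h⟩ : R) with hx₁def
  have hx₁I : ∀ δ i, x₁ δ i - x₀ i ∈ I := by
    intro δ i
    simp only [hx₁def, add_sub_cancel_left]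
    split_ifs
    · exact Submodule.zero_mem _
    · exact Subtype.mem _
  have hmk : ∀ δ, ⇑(Ideal.Quotient.mk I) ∘ (x₁ δ) = ⇑(Ideal.Quotient.mk I) ∘ x₀ := by
    intro δ
    funext i
    exact (Ideal.Quotient.mk_eq_mk_iff_sub_mem _ _).mpr (hx₁I δ i)
  have hqI : ∀ δ, qf (x₁ δ) ∈ I := by
    intro δ
    rw [← Ideal.Quotient.eq_zero_iff_mem, ← qf_map, hmk δ, qf_map, hq0, map_zero]
  have hu1 : ∀ δ, IsUnit (x₁ δ i₀) := by
    intro δ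
    have : x₁ δ i₀ = x₀ i₀ + (x₁ δ i₀ - x₀ i₀) := by ring
    rw [this]
    exact unit_add_mem hu (hIm (hx₁I δ i₀))
  have hu2 : ∀ δ, IsUnit (2 * x₁ δ i₀) := fun δ => (two_isUnit hchar).mul (hu1 δ)
  refine ⟨?_, ?_, ?_, ?_⟩
  · -- invFun direction first? no: Equiv needs toFun invFun left right
    exact fun x => fun i => ⟨x.1 i.1 - x₀ i.1,
      (Ideal.Quotient.mk_eq_mk_iff_sub_mem _ _).mp (congrFun x.2.2 i.1)⟩
  · -- invFun : δ → fiber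
    intro δ
    refine ⟨Function.update (x₁ δ) j (solveV (x₁ δ) j i₀), ?_, ?_⟩
    · rw [mem_iff]
      refine ⟨span_of_unit (i := i₀) ?_, qf_update_solve (x₁ δ) hj hne (hu2 δ)⟩
      rw [Function.update_of_ne (Ne.symm hne)]
      exact hu1 δ
    · funext i
      by_cases hij : i = j
      · subst hij
        simp only [Function.comp_apply, Function.update_self]
        rw [Ideal.Quotient.mk_eq_mk_iff_sub_mem]
        have h1 : x₁ δ j - solveV (x₁ δ) j i₀ ∈ I :=
          solve_sub_mem (x₁ δ) hj hne (hu2 δ) (hqI δ)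
        have h2 : x₁ δ j - x₀ j ∈ I := hx₁I δ j
        have he : solveV (x₁ δ) j i₀ - x₀ j
            = (x₁ δ j - x₀ j) - (x₁ δ j - solveV (x₁ δ) j i₀) := by ring
        rw [he]
        exact Submodule.sub_mem _ h2 h1
      · simp only [Function.comp_apply, Function.update_of_ne hij]
        exact (Ideal.Quotient.mk_eq_mk_iff_sub_mem _ _).mpr (hx₁I δ i)
  · -- left_inv
    have main : ∀ (δ : {i : Fin n // i ≠ j} → I) (x : Fin n → R), x ∈ unimodIsotropic R n →
        (∀ (i : Fin n) (h : i ≠ j), x i = x₀ i + (δ ⟨i, h⟩ : R)) →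
        Function.update (x₁ δ) j (solveV (x₁ δ) j i₀) = x := by
      intro δ x hx hagree
      have hx1 : x₁ δ = Function.update x j (x₀ j) := by
        funext i
        by_cases h : i = j
        · subst h
          simp [hx₁def]
        · simp only [hx₁def, dif_neg h, Function.update_of_ne h]
          exact (hagree i h).symm
      have hv : x j = solveV (x₁ δ) j i₀ := by
        refine qf_update_unique (x₁ δ) hj hne (hu2 δ) (x j) ?_
        rw [hx1, Function.update_idem, Function.update_eq_self]
        exact ((mem_iff x).mp hx).2
      rw [← hv, hx1, Function.update_idem, Function.update_eq_self]
    intro x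
    apply Subtype.ext
    exact main (fun i => ⟨x.1 i.1 - x₀ i.1,
      (Ideal.Quotient.mk_eq_mk_iff_sub_mem _ _).mp (congrFun x.2.2 i.1)⟩) x.1 x.2.1
      (fun i h => by ring)
  · -- right_inv
    intro δ
    funext i
    apply Subtype.ext
    simp only [Function.update_of_ne i.2, hx₁def, dif_neg i.2, add_sub_cancel_left]

end UIaux

theorem unimod_isotropic_reduction_surjective_and_card
    {R : Type*} [CommRing R] [IsLocalRing R]
    (hchar : ringChar (IsLocalRing.ResidueField R) ≠ 2)
    (I : Ideal R) (hI : I ≠ ⊤) (n : ℕ) (hn : 2 ≤ n) :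
    (fun x : Fin n → R => (Ideal.Quotient.mk I) ∘ x) '' unimodIsotropic R n =
        unimodIsotropic (R ⧸ I) n ∧
      Nat.card (unimodIsotropic R n) =
        Nat.card (unimodIsotropic (R ⧸ I) n) * Nat.card I ^ (n - 1) := by
  constructor
  · apply Set.eq_of_subset_of_subset
    · rintro - ⟨x, hx, rfl⟩
      exact UIaux.mem_image_of_mem hx
    · intro y hy
      obtain ⟨x, hx, hxy⟩ := UIaux.exists_lift hchar hI hy
      exact ⟨x, hx, hxy⟩
  · set f : unimodIsotropic R n → unimodIsotropic (R ⧸ I) n :=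
      fun x => ⟨⇑(Ideal.Quotient.mk I) ∘ x.1, UIaux.mem_image_of_mem x.2⟩ with hfdef
    have hequiv : ∀ y : unimodIsotropic (R ⧸ I) n,
        Nonempty ({p : unimodIsotropic R n // f p = y} ≃ (Fin (n - 1) → I)) := by
      intro y
      obtain ⟨x₀, hx₀, hmk⟩ := UIaux.exists_lift hchar hI y.2
      obtain ⟨j, ⟨e⟩⟩ := UIaux.fiber_equiv hchar hI (I := I) hx₀
      have e1 : {p : unimodIsotropic R n // f p = y} ≃
          {x : Fin n → R // x ∈ unimodIsotropic R n ∧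
            ⇑(Ideal.Quotient.mk I) ∘ x = ⇑(Ideal.Quotient.mk I) ∘ x₀} :=
        { toFun := fun p => ⟨p.1.1, p.1.2, by
            rw [hmk]
            exact congrArg Subtype.val p.2⟩
          invFun := fun x => ⟨⟨x.1, x.2.1⟩, Subtype.ext (x.2.2.trans hmk)⟩
          left_inv := fun p => rfl
          right_inv := fun x => rfl }
      have hcard : Fintype.card {i : Fin n // i ≠ j} = n - 1 := by
        simp [Fintype.card_subtype_compl]
      exact ⟨(e1.trans e).trans
        (Equiv.arrowCongr (Fintype.equivFinOfCardEq hcard) (Equiv.refl I))⟩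
    have h1 : Nat.card (unimodIsotropic R n) =
        Nat.card ((unimodIsotropic (R ⧸ I) n) × (Fin (n - 1) → I)) := by
      refine Nat.card_congr ?_
      exact ((Equiv.sigmaFiberEquiv f).symm.trans
        (Equiv.sigmaCongrRight fun y => (hequiv y).some)).trans
        (Equiv.sigmaEquivProd _ _)
    have hfin : Nat.card (Fin (n - 1)) = n - 1 :=
      Nat.card_eq_fintype_card.trans (Fintype.card_fin _)
    rw [h1, Nat.card_prod, Nat.card_fun, hfin]
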